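/- arXiv:2104.13170 — 3 statements merged into one kernel-verified Lean document; each statement's English description precedes it below -/
import Mathlib

section
/- Let 𝕂 = ℚ(√d) be a real quadratic field of class number one with d > 1 squarefree, d ≡ 3 (mod 4), and fix 𝒞 ∈ ℕ. Then there is a constant c = c(𝒞, 𝕂) such that for all N ≥ 2 and all nonzero ideals 𝔫 of 𝒪 with 𝒩(𝔫) ≤ N, one has Ψ(𝔫) ≤ c · (𝒩(𝔫)/N)^𝒞. -/
open NumberField

open scoped Classical

set_option synthInstance.maxHeartbeats 1000000
set_option maxHeartbeats 1000000

/-- The weight `f(x) = (exp(−πx²) − exp(−2πx²))^𝒞`. -/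
noncomputable def fwt (C : ℕ) (x : ℝ) : ℝ :=
  (Real.exp (-Real.pi * x^2) - Real.exp (-2 * Real.pi * x^2)) ^ C

/-- The smooth weight `Ψ(𝔫) = ∑_{k ∈ 𝒪, (k) = 𝔫} f(σ₁(k)/√N) f(σ₂(k)/√N)`,
where `σ₁` is the inclusion `K ⊆ ℝ` and `σ₂` the second real embedding. -/
noncomputable def PsiW (K : Subfield ℝ) [NumberField K] (σ₂ : K →+* ℝ) (C : ℕ) (N : ℝ)
    (n : Ideal (𝓞 K)) : ℝ :=
  ∑' k : 𝓞 K, if Ideal.span {k} = n then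
    fwt C (((k : K) : ℝ) / Real.sqrt N) * fwt C (σ₂ (k : K) / Real.sqrt N) else 0

lemma fwt_base_nonneg (x:ℝ) : 0 ≤ (Real.exp (-Real.pi * x^2) - Real.exp (-2 * Real.pi * x^2)) := by
  have := Real.pi_pos
  have h : (-2 * Real.pi * x^2) ≤ (-Real.pi * x^2) := by nlinarith [sq_nonneg x]
  linarith [Real.exp_le_exp.mpr h]

lemma fwt_base_le (x:ℝ) : (Real.exp (-Real.pi * x^2) - Real.exp (-2 * Real.pi * x^2))
    ≤ min (Real.pi * x^2) 1 := by
  set a := Real.exp (-Real.pi * x^2) with ha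
  have h2 : Real.exp (-2 * Real.pi * x^2) = a * a := by
    rw [ha, ← Real.exp_add]; ring_nf
  have hpx : 0 ≤ Real.pi * x^2 := by positivity
  have ha0 : 0 < a := Real.exp_pos _
  have ha1 : a ≤ 1 := by
    rw [ha, Real.exp_le_one_iff]; nlinarith [Real.pi_pos, sq_nonneg x]
  have h1a : 1 - a ≤ Real.pi * x^2 := by
    have := Real.add_one_le_exp (-(Real.pi*x^2))
    have : 1 - Real.pi*x^2 ≤ a := by rw [ha]; rw [neg_mul]; linarith
    linarith
  rw [le_min_iff]
  exact ⟨by nlinarith, by nlinarith⟩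

lemma fwt_nonneg (C:ℕ) (x:ℝ) : 0 ≤ fwt C x := pow_nonneg (fwt_base_nonneg x) C

lemma fwt_le_one (C:ℕ) (x:ℝ) : fwt C x ≤ 1 :=
  pow_le_one₀ (fwt_base_nonneg x) ((fwt_base_le x).trans (min_le_right _ _))

lemma fwt_le_pow (C:ℕ) (x:ℝ) : fwt C x ≤ (Real.pi * x^2)^C :=
  pow_le_pow_left₀ (fwt_base_nonneg x) ((fwt_base_le x).trans (min_le_left _ _)) C

/-- The key single-term bound. -/
lemma term_bound (C : ℕ) (N Nm lam : ℝ) (hN : 0 < N) (hNm : 0 < Nm) (hlam : 1 < lam)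
    (t y : ℝ) (ht : t ≠ 0) (hty : |t * y| = Nm) :
    fwt C (t / Real.sqrt N) * fwt C (y / Real.sqrt N) ≤
      Real.pi ^ C * (Nm / N) ^ C *
        ((lam ^ (-(2 * C : ℝ)))⁻¹ *
          (lam ^ (-(2 * C : ℝ))) ^ (⌊Real.log (t ^ 2 / Nm) / (2 * Real.log lam)⌋).natAbs) := by
  have hlam0 : (0:ℝ) < lam := lt_trans one_pos hlam
  have hL : 0 < Real.log lam := Real.log_pos hlam
  set q : ℝ := lam ^ (-(2 * C : ℝ)) with hqdef
  have hq0 : 0 < q := Real.rpow_pos_of_pos hlam0 _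
  have hq1 : q ≤ 1 := by
    rw [hqdef]
    apply Real.rpow_le_one_of_one_le_of_nonpos hlam.le
    simp
  set ρ : ℝ := t ^ 2 / Nm with hρdef
  have hρ0 : 0 < ρ := by
    apply div_pos (by positivity) hNm
  set A : ℝ := Real.log ρ / (2 * Real.log lam) with hAdef
  set ν : ℤ := ⌊A⌋ with hνdef
  set r : ℝ := Nm / N with hrdef
  have hr0 : 0 < r := div_pos hNm hN
  have hsqN : Real.sqrt N ^ 2 = N := Real.sq_sqrt hN.le
  have hdx : (t / Real.sqrt N)^2 = t^2 / N := by rw [div_pow, hsqN]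
  have hdy : (y / Real.sqrt N)^2 = y^2 / N := by rw [div_pow, hsqN]
  set m : ℝ := min ρ ρ⁻¹ with hmdef
  have hm0 : 0 < m := lt_min hρ0 (inv_pos.mpr hρ0)
  have step1 : fwt C (t / Real.sqrt N) * fwt C (y / Real.sqrt N) ≤
      Real.pi ^ C * r ^ C * m ^ C := by
    rcases le_or_gt ρ 1 with hρ1 | hρ1
    · have hmeq : m = ρ := min_eq_left (hρ1.trans (one_le_inv_iff₀.mpr ⟨hρ0, hρ1⟩))
      have h1 : fwt C (t / Real.sqrt N) ≤ (Real.pi * (t^2/N))^C := by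
        have := fwt_le_pow C (t / Real.sqrt N); rwa [hdx] at this
      have h2 : fwt C (y / Real.sqrt N) ≤ 1 := fwt_le_one C _
      calc fwt C (t / Real.sqrt N) * fwt C (y / Real.sqrt N)
          ≤ (Real.pi * (t^2/N))^C * 1 :=
            mul_le_mul h1 h2 (fwt_nonneg _ _) (by positivity)
        _ = Real.pi ^ C * r ^ C * m ^ C := by
            rw [mul_one, hmeq, ← mul_pow, ← mul_pow]
            congr 1
            rw [hrdef, hρdef]
            field_simp
    · have hmeq : m = ρ⁻¹ := min_eq_right (by
        have : ρ⁻¹ ≤ 1 := inv_le_one_of_one_le₀ hρ1.le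
        linarith)
      have hy2 : y^2 = Nm^2 / t^2 := by
        have h := hty
        have : (t*y)^2 = Nm^2 := by rw [← h]; rw [sq_abs]
        have ht2 : t^2 ≠ 0 := pow_ne_zero 2 ht
        field_simp at this ⊢
        nlinarith [this]
      have h1 : fwt C (t / Real.sqrt N) ≤ 1 := fwt_le_one C _
      have h2 : fwt C (y / Real.sqrt N) ≤ (Real.pi * (y^2/N))^C := by
        have := fwt_le_pow C (y / Real.sqrt N); rwa [hdy] at this
      calc fwt C (t / Real.sqrt N) * fwt C (y / Real.sqrt N)
          ≤ 1 * (Real.pi * (y^2/N))^C :=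
            mul_le_mul h1 h2 (fwt_nonneg _ _) one_pos.le
        _ = Real.pi ^ C * r ^ C * m ^ C := by
            rw [one_mul, hmeq, ← mul_pow, ← mul_pow]
            congr 1
            rw [hrdef, hρdef, hy2]
            have ht2 : t^2 ≠ 0 := pow_ne_zero 2 ht
            field_simp
  have hρ_eq : ρ = lam ^ (2*A) := by
    rw [Real.rpow_def_of_pos hlam0]
    rw [hAdef]
    rw [show Real.log lam * (2 * (Real.log ρ / (2 * Real.log lam))) = Real.log ρ by
      field_simp]
    rw [Real.exp_log hρ0]
  have hρinv_eq : ρ⁻¹ = lam ^ (-(2*A)) := by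
    rw [Real.rpow_neg hlam0.le, hρ_eq]
  have hmono : Monotone (fun x:ℝ => lam ^ (x:ℝ)) := fun a b h =>
    Real.rpow_le_rpow_of_exponent_le hlam.le h
  have hm_eq : m = lam ^ (-(2*|A|)) := by
    rw [hmdef, hρinv_eq, hρ_eq, ← hmono.map_min]
    congr 1
    rcases abs_cases A with ⟨h1, h2⟩ | ⟨h1, h2⟩
    · rw [h1, min_eq_right (by linarith)]
    · rw [h1, min_eq_left (by linarith)]; ring
  have hmC : m ^ C = q ^ (|A| : ℝ) := by
    have e1 : m ^ C = lam ^ ((-(2*|A|)) * (C:ℝ)) := by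
      rw [← Real.rpow_natCast m C, hm_eq, ← Real.rpow_mul hlam0.le]
    have e2 : q ^ (|A| : ℝ) = lam ^ ((-(2*(C:ℝ))) * |A|) := by
      rw [hqdef, ← Real.rpow_mul hlam0.le]
    rw [e1, e2]
    congr 1
    ring
  have hfloor : (ν.natAbs : ℝ) - 1 ≤ |A| := by
    have h1 : (ν:ℝ) ≤ A := Int.floor_le A
    have h2 : A < (ν:ℝ) + 1 := Int.lt_floor_add_one A
    have h3 : (ν.natAbs : ℝ) = |(ν:ℝ)| := by rw [Nat.cast_natAbs, Int.cast_abs]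
    rw [h3]
    rcases abs_cases (ν:ℝ) with ⟨h4, _⟩ | ⟨h4, _⟩ <;> rcases abs_cases A with ⟨h5, _⟩ | ⟨h5, _⟩ <;>
      rw [h4, h5] <;> linarith
  have step2 : m ^ C ≤ q⁻¹ * q ^ ν.natAbs := by
    rw [hmC]
    calc q ^ (|A| : ℝ) ≤ q ^ ((ν.natAbs : ℝ) - 1) :=
          Real.rpow_le_rpow_of_exponent_ge hq0 hq1 (by linarith)
      _ = q⁻¹ * q ^ ν.natAbs := by
          rw [Real.rpow_sub hq0, Real.rpow_one, Real.rpow_natCast, div_eq_mul_inv]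
          ring
  calc fwt C (t / Real.sqrt N) * fwt C (y / Real.sqrt N)
      ≤ Real.pi ^ C * r ^ C * m ^ C := step1
    _ ≤ Real.pi ^ C * r ^ C * (q⁻¹ * q ^ ν.natAbs) := by
        apply mul_le_mul_of_nonneg_left step2 (by positivity)

/-- The two complex embeddings of `K`. -/
noncomputable def phi1 (K : Subfield ℝ) : K →+* ℂ := Complex.ofRealHom.comp K.subtype
noncomputable def phi2 (K : Subfield ℝ) (σ₂ : K →+* ℝ) : K →+* ℂ := Complex.ofRealHom.comp σ₂

lemma norm_eq_mul (K : Subfield ℝ) [NumberField K] (σ₂ : K →+* ℝ)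
    (hclassify : ∀ φ : K →+* ℂ, φ = phi1 K ∨ φ = phi2 K σ₂)
    (hne : phi1 K ≠ phi2 K σ₂)
    (x : K) : ((Algebra.norm ℚ x : ℚ) : ℝ) = (x : ℝ) * σ₂ x := by
  classical
  have key : algebraMap ℚ ℂ (Algebra.norm ℚ x) = ∏ ψ : K →ₐ[ℚ] ℂ, ψ x :=
    Algebra.norm_eq_prod_embeddings ℚ ℂ x
  set ψ₁ : K →ₐ[ℚ] ℂ := (phi1 K).toRatAlgHom with hψ₁
  set ψ₂ : K →ₐ[ℚ] ℂ := (phi2 K σ₂).toRatAlgHom with hψ₂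
  have hne' : ψ₁ ≠ ψ₂ := by
    intro h
    apply hne
    ext a
    exact DFunLike.congr_fun h a
  have hclassify' : ∀ ψ : K →ₐ[ℚ] ℂ, ψ = ψ₁ ∨ ψ = ψ₂ := by
    intro ψ
    rcases hclassify ψ.toRingHom with h | h
    · left; ext a; exact DFunLike.congr_fun h a
    · right; ext a; exact DFunLike.congr_fun h a
  have huniv : (Finset.univ : Finset (K →ₐ[ℚ] ℂ)) = {ψ₁, ψ₂} := by
    symm
    rw [Finset.eq_univ_iff_forall]
    intro ψ
    rcases hclassify' ψ with h | h <;> simp [h]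
  rw [huniv, Finset.prod_insert (by simp [hne']), Finset.prod_singleton] at key
  have key2 : ((Algebra.norm ℚ x : ℚ) : ℂ) = ((x:ℝ) : ℂ) * ((σ₂ x : ℝ) : ℂ) := by
    rw [show ((Algebra.norm ℚ x : ℚ) : ℂ) = algebraMap ℚ ℂ (Algebra.norm ℚ x) by norm_cast]
    rw [key]; rfl
  have := key2
  rw [← Complex.ofReal_mul] at this
  rw [show ((Algebra.norm ℚ x : ℚ) : ℂ) = (((Algebra.norm ℚ x : ℚ) : ℝ) : ℂ) by norm_cast] at this
  exact_mod_cast this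

lemma unit_gap (K : Subfield ℝ) [NumberField K] (σ₂ : K →+* ℝ)
    (hclassify : ∀ φ : K →+* ℂ, φ = phi1 K ∨ φ = phi2 K σ₂)
    (hnorm1 : ∀ u : (𝓞 K)ˣ, |(((u : 𝓞 K) : K) : ℝ) * σ₂ ((u : 𝓞 K) : K)| = 1) :
    ∃ lam : ℝ, 1 < lam ∧ ∀ u : (𝓞 K)ˣ, ((u : 𝓞 K) : K) ≠ 1 → ((u : 𝓞 K) : K) ≠ -1 →
      lam ≤ max |(((u : 𝓞 K) : K) : ℝ)| |σ₂ ((u : 𝓞 K) : K)| := by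
  classical
  set S : Set K := {x : K | IsIntegral ℤ x ∧ ∀ φ : K →+* ℂ, ‖φ x‖ ≤ 2} with hS
  have hSfin : S.Finite := NumberField.Embeddings.finite_of_norm_le K ℂ 2
  set V : Set ℝ := {t : ℝ | 1 < t ∧ t ∈ (fun x : K => max |(x : ℝ)| |σ₂ x|) '' S} with hV
  have hVfin : V.Finite := Set.Finite.subset (hSfin.image _) (fun t ht => ht.2)
  set W : Finset ℝ := insert (2:ℝ) hVfin.toFinset with hW
  have hWne : W.Nonempty := ⟨2, Finset.mem_insert_self _ _⟩
  refine ⟨W.min' hWne, ?_, ?_⟩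
  · rcases Finset.min'_mem W hWne with hm
    rcases Finset.mem_insert.mp hm with h | h
    · rw [h]; norm_num
    · exact (hVfin.mem_toFinset.mp h).1
  · intro u h1 hm1
    set x : K := ((u : 𝓞 K) : K) with hx
    set M : ℝ := max |(x : ℝ)| |σ₂ x| with hM
    have hprod : |(x : ℝ)| * |σ₂ x| = 1 := by rw [← abs_mul]; exact hnorm1 u
    have habs1 : 0 ≤ |(x:ℝ)| := abs_nonneg _
    have habs2 : 0 ≤ |σ₂ x| := abs_nonneg _
    have hM1 : 1 ≤ M := by
      rcases le_or_gt 1 |(x:ℝ)| with h | h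
      · exact h.trans (le_max_left _ _)
      · have : 1 ≤ |σ₂ x| := by nlinarith
        exact this.trans (le_max_right _ _)
    have hMne1 : M ≠ 1 := by
      intro hM1'
      have hxa : |(x:ℝ)| ≤ 1 := hM1' ▸ le_max_left _ _
      have hxb : |σ₂ x| ≤ 1 := hM1' ▸ le_max_right _ _
      have hxeq : |(x:ℝ)| = 1 := by nlinarith
      rcases abs_eq (by norm_num : (0:ℝ) ≤ 1) |>.mp hxeq with h | h
      · exact h1 (by
          have : ((x : ℝ)) = ((1 : K) : ℝ) := by rw [h]; simp
          exact_mod_cast Subtype.val_injective this)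
      · exact hm1 (by
          have : ((x : ℝ)) = (((-1) : K) : ℝ) := by rw [h]; simp
          exact_mod_cast Subtype.val_injective this)
    have hMgt1 : 1 < M := lt_of_le_of_ne hM1 (Ne.symm hMne1)
    rcases le_or_gt M 2 with hle | hgt
    · have hxS : x ∈ S := by
        refine ⟨RingOfIntegers.isIntegral_coe _, fun φ => ?_⟩
        rcases hclassify φ with h | h
        · rw [h]
          simp only [phi1, RingHom.comp_apply, Complex.ofRealHom_eq_coe, Complex.norm_real]
          exact le_trans (le_max_left |(x:ℝ)| |σ₂ x|) hle
        · rw [h]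
          simp only [phi2, RingHom.comp_apply, Complex.ofRealHom_eq_coe, Complex.norm_real]
          exact (le_max_right _ _).trans hle
      have hMV : M ∈ V := ⟨hMgt1, ⟨x, hxS, rfl⟩⟩
      exact Finset.min'_le W M (Finset.mem_insert.mpr (Or.inr (hVfin.mem_toFinset.mpr hMV)))
    · have : W.min' hWne ≤ 2 := Finset.min'_le W 2 (Finset.mem_insert_self _ _)
      linarith

/-- **Bound for `Ψ` at ideals of small norm:** for all `N ≥ 2` and nonzero ideals `𝔫`
with `𝒩(𝔫) ≤ N`, one has `Ψ(𝔫) ≤ c (𝒩(𝔫)/N)^𝒞`. -/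
theorem psi_small_norm_bound
    (d : ℕ) (hd : 1 < d) (hdsq : Squarefree d) (hd4 : d % 4 = 3)
    (K : Subfield ℝ) [NumberField K]
    (hdeg : Module.finrank ℚ K = 2)
    (sq : 𝓞 K) (hsq : ((sq : K) : ℝ) = Real.sqrt d)
    (hclass : NumberField.classNumber K = 1)
    (σ₂ : K →+* ℝ) (hσ₂ : σ₂ (sq : K) = -Real.sqrt d)
    (C : ℕ) (hC : 0 < C) :
    ∃ c : ℝ, ∀ N : ℝ, 2 ≤ N → ∀ n : Ideal (𝓞 K), n ≠ ⊥ → (Ideal.absNorm n : ℝ) ≤ N →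
      PsiW K σ₂ C N n ≤ c * ((Ideal.absNorm n : ℝ) / N) ^ C := by
  classical
  have hsd : (0:ℝ) < Real.sqrt d := Real.sqrt_pos.mpr (by positivity)
  have hne : phi1 K ≠ phi2 K σ₂ := by
    intro h
    have h1 : phi1 K (sq : K) = phi2 K σ₂ (sq : K) := by rw [h]
    simp only [phi1, phi2, RingHom.comp_apply, Complex.ofRealHom_eq_coe] at h1
    rw [show (K.subtype (sq : K)) = ((sq : K) : ℝ) from rfl, hsq, hσ₂] at h1
    have := Complex.ofReal_inj.mp h1
    linarith
  have hclassify : ∀ φ : K →+* ℂ, φ = phi1 K ∨ φ = phi2 K σ₂ := by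
    have hcard : Fintype.card (K →+* ℂ) = 2 := by
      rw [NumberField.Embeddings.card K ℂ, hdeg]
    intro φ
    have huniv : (Finset.univ : Finset (K →+* ℂ)) = {phi1 K, phi2 K σ₂} := by
      symm
      apply Finset.eq_univ_of_card
      rw [Finset.card_insert_of_notMem (by simp [hne]), Finset.card_singleton, hcard]
    have : φ ∈ (Finset.univ : Finset (K →+* ℂ)) := Finset.mem_univ φ
    rw [huniv] at this
    simpa using this
  have hnormmul : ∀ x : K, ((Algebra.norm ℚ x : ℚ) : ℝ) = (x : ℝ) * σ₂ x :=
    norm_eq_mul K σ₂ hclassify hne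
  -- |σ₁(k)σ₂(k)| is the absolute norm of (k)
  have habs : ∀ k : 𝓞 K, |((k:K):ℝ) * σ₂ (k:K)|
      = ((Ideal.absNorm (Ideal.span {k}) : ℕ) : ℝ) := by
    intro k
    rw [← hnormmul, Ideal.absNorm_span_singleton]
    rw [← Algebra.coe_norm_int k]
    push_cast
    rw [Nat.cast_natAbs, Int.cast_abs]
  have hnorm1 : ∀ u : (𝓞 K)ˣ, |(((u : 𝓞 K) : K) : ℝ) * σ₂ ((u : 𝓞 K) : K)| = 1 := by
    intro u
    rw [← hnormmul]
    have h := NumberField.isUnit_iff_norm.mp u.isUnit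
    rw [RingOfIntegers.coe_norm] at h
    rw [show ((1:ℝ)) = ((1:ℚ):ℝ) by norm_cast, ← Rat.cast_abs]
    exact_mod_cast congrArg (fun z : ℚ => (z : ℝ)) h
  obtain ⟨lam, hlam, hgap⟩ := unit_gap K σ₂ hclassify hnorm1
  have hlam0 : (0:ℝ) < lam := lt_trans one_pos hlam
  have hL : 0 < Real.log lam := Real.log_pos hlam
  set q : ℝ := lam ^ (-(2 * C : ℝ)) with hqdef
  have hq0 : 0 < q := Real.rpow_pos_of_pos hlam0 _
  have hq1 : q < 1 := by
    rw [hqdef]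
    apply Real.rpow_lt_one_of_one_lt_of_neg hlam
    have : (0:ℝ) < (C:ℝ) := by exact_mod_cast hC
    linarith
  have hsum : Summable (fun m : ℤ => q ^ m.natAbs) := by
    apply Summable.of_nat_of_neg
    · simpa using summable_geometric_of_lt_one hq0.le hq1
    · simpa using summable_geometric_of_lt_one hq0.le hq1
  set T : ℝ := ∑' m : ℤ, q ^ m.natAbs with hTdef
  have hT0 : 0 ≤ T := tsum_nonneg (fun m => by positivity)
  refine ⟨Real.pi ^ C * (q⁻¹ * (2 * T)), ?_⟩
  intro N hN n hn hnle
  have hN0 : (0:ℝ) < N := by linarith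
  set Nm : ℝ := ((Ideal.absNorm n : ℕ) : ℝ) with hNmdef
  have hNm0 : (0:ℝ) < Nm := by
    have h0 : Ideal.absNorm n ≠ 0 := by
      rw [Ne, Ideal.absNorm_eq_zero_iff]; exact hn
    have h1 : 0 < Ideal.absNorm n := Nat.pos_of_ne_zero h0
    rw [hNmdef]
    exact_mod_cast h1
  set r : ℝ := Nm / N with hrdef
  have hr0 : 0 < r := div_pos hNm0 hN0
  have hgoal0 : 0 ≤ Real.pi ^ C * (q⁻¹ * (2 * T)) * r ^ C := by positivity
  rw [PsiW]
  apply tsum_le_of_sum_le' hgoal0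
  intro s
  set ν : 𝓞 K → ℤ :=
    fun k => ⌊Real.log (((k:K):ℝ)^2 / Nm) / (2 * Real.log lam)⌋ with hνdef
  set F : Finset (𝓞 K) := s.filter (fun k => Ideal.span {k} = n) with hFdef
  -- elements of F are nonzero with |σ₁σ₂| = Nm
  have hFabs : ∀ k ∈ F, |((k:K):ℝ) * σ₂ (k:K)| = Nm := by
    intro k hk
    have := (Finset.mem_filter.mp hk).2
    rw [habs k, this]
  have hFne : ∀ k ∈ F, ((k:K):ℝ) ≠ 0 := by
    intro k hk h0
    have := hFabs k hk
    rw [h0, zero_mul, abs_zero] at this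
    linarith
  -- separation claim
  have claim : ∀ k ∈ F, ∀ k' ∈ F, k ≠ k' → ν k = ν k' → ((k':K):ℝ) = -(((k:K)):ℝ) := by
    intro k hk k' hk' hne' hνeq
    have h1 := (Finset.mem_filter.mp hk).2
    have h2 := (Finset.mem_filter.mp hk').2
    have hassoc : Associated k k' :=
      Ideal.span_singleton_eq_span_singleton.mp (by rw [h1, h2])
    obtain ⟨u, hu⟩ := hassoc
    set a : ℝ := ((k:K):ℝ) with hadef
    set a2 : ℝ := σ₂ (k:K) with ha2def
    set b : ℝ := ((k':K):ℝ) with hbdef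
    set b2 : ℝ := σ₂ (k':K) with hb2def
    set w1 : ℝ := (((u : 𝓞 K) : K) : ℝ) with hw1def
    set w2 : ℝ := σ₂ ((u : 𝓞 K) : K) with hw2def
    have hkK : ((k' : 𝓞 K) : K) = (k : K) * ((u : 𝓞 K) : K) := by
      rw [← hu]; exact map_mul (algebraMap (𝓞 K) K) k (u : 𝓞 K)
    have hmul1 : b = a * w1 := by
      rw [hbdef, hadef, hw1def, hkK]; push_cast; ring
    have hmul2 : b2 = a2 * w2 := by
      rw [hb2def, ha2def, hw2def, hkK, map_mul]
    have ha0 : a ≠ 0 := hFne k hk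
    have hb0 : b ≠ 0 := hFne k' hk'
    have ha20 : a2 ≠ 0 := by
      intro h0
      have := hFabs k hk
      rw [← hadef, ← ha2def, h0, mul_zero, abs_zero] at this
      linarith
    by_cases hu1 : ((u : 𝓞 K) : K) = 1
    · exfalso
      apply hne'
      apply NumberField.RingOfIntegers.ext
      rw [hkK, hu1, mul_one]
    by_cases hum1 : ((u : 𝓞 K) : K) = -1
    · rw [hmul1, hw1def, hum1]; push_cast; ring
    exfalso
    have hmax := hgap u hu1 hum1
    rw [← hw1def, ← hw2def] at hmax
    have hw1w2 : |w1| * |w2| = 1 := by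
      have e1 := hFabs k hk
      have e2 := hFabs k' hk'
      rw [← hadef, ← ha2def] at e1
      rw [← hbdef, ← hb2def] at e2
      rw [hmul1, hmul2] at e2
      rw [show a * w1 * (a2 * w2) = (a * a2) * (w1 * w2) by ring, abs_mul, e1] at e2
      have hNmne : Nm ≠ 0 := ne_of_gt hNm0
      have : |w1 * w2| = 1 := by
        have := mul_left_cancel₀ hNmne (e2.trans (mul_one Nm).symm)
        exact this
      rw [← abs_mul]
      exact this
    have hw10 : w1 ≠ 0 := by
      intro h0; rw [h0, abs_zero, zero_mul] at hw1w2; linarith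
    -- Af difference
    have hAf : Real.log ((b)^2 / Nm) / (2 * Real.log lam)
        = Real.log ((a)^2 / Nm) / (2 * Real.log lam) + Real.log |w1| / Real.log lam := by
      rw [hmul1]
      rw [show (a*w1)^2 / Nm = (a^2/Nm) * (w1^2) by field_simp]
      rw [Real.log_mul (by positivity) (by positivity)]
      rw [show Real.log (w1^2) = Real.log (|w1|^2) by rw [sq_abs]]
      rw [Real.log_pow]
      push_cast
      field_simp
    have hfl : ν k' = ν k := hνeq.symm
    rw [hνdef] at hfl
    simp only [← hadef, ← hbdef] at hfl
    rcases le_max_iff.mp hmax with hw | hw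
    · -- lam ≤ |w1|
      have hlog : Real.log lam ≤ Real.log |w1| := Real.log_le_log hlam0 hw
      have hge : Real.log ((a)^2 / Nm) / (2 * Real.log lam) + 1
          ≤ Real.log ((b)^2 / Nm) / (2 * Real.log lam) := by
        rw [hAf]
        have : 1 ≤ Real.log |w1| / Real.log lam := by
          rw [le_div_iff₀ hL]; linarith
        linarith
      have := Int.floor_le_floor hge
      rw [Int.floor_add_one] at this
      omega
    · -- lam ≤ |w2|, so |w1| ≤ lam⁻¹
      have hw2pos : 0 < |w2| := lt_of_lt_of_le hlam0 hw
      have hw1le : |w1| ≤ lam⁻¹ := by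
        rw [show |w1| = |w2|⁻¹ by field_simp at hw1w2 ⊢; linarith [hw1w2]]
        exact inv_anti₀ hlam0 hw
      have hlog : Real.log |w1| ≤ -Real.log lam := by
        rw [← Real.log_inv]
        exact Real.log_le_log (abs_pos.mpr hw10) hw1le
      have hge : Real.log ((b)^2 / Nm) / (2 * Real.log lam) + 1
          ≤ Real.log ((a)^2 / Nm) / (2 * Real.log lam) := by
        rw [hAf]
        have : Real.log |w1| / Real.log lam ≤ -1 := by
          rw [div_le_iff₀ hL]; linarith
        linarith
      have := Int.floor_le_floor hge
      rw [Int.floor_add_one] at this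
      omega
  -- bound the sum over a sign-class
  have hXbound : ∀ X : Finset (𝓞 K), X ⊆ F →
      (∀ k ∈ X, ∀ k' ∈ X, ((0:ℝ) < ((k:K):ℝ) ↔ (0:ℝ) < ((k':K):ℝ))) →
      ∑ k ∈ X, q ^ (ν k).natAbs ≤ T := by
    intro X hXF hsign
    have hinj : ∀ k ∈ X, ∀ k' ∈ X, ν k = ν k' → k = k' := by
      intro k hk k' hk' hνeq
      by_contra hne'
      have hb := claim k (hXF hk) k' (hXF hk') hne' hνeq
      have ha0 : ((k:K):ℝ) ≠ 0 := hFne k (hXF hk)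
      have hiff := hsign k hk k' hk'
      rcases lt_or_gt_of_ne ha0 with h | h
      · have : (0:ℝ) < ((k':K):ℝ) := by rw [hb]; linarith
        have := hiff.mpr this
        linarith
      · have := hiff.mp h
        rw [hb] at this
        linarith
    calc ∑ k ∈ X, q ^ (ν k).natAbs
        = ∑ m ∈ X.image ν, q ^ m.natAbs :=
          (Finset.sum_image (f := fun m : ℤ => q ^ m.natAbs) hinj).symm
      _ ≤ T := Summable.sum_le_tsum _ (fun m _ => by positivity) hsum
  have hFsum : ∑ k ∈ F, q ^ (ν k).natAbs ≤ 2 * T := by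
    have hsplit := Finset.sum_filter_add_sum_filter_not F
      (fun k : 𝓞 K => (0:ℝ) < ((k:K):ℝ)) (fun k => q ^ (ν k).natAbs)
    have h1 : ∑ k ∈ Finset.filter (fun k : 𝓞 K => (0:ℝ) < ((k:K):ℝ)) F,
        q ^ (ν k).natAbs ≤ T := by
      apply hXbound _ (Finset.filter_subset _ _)
      intro k hk k' hk'
      exact iff_of_true (Finset.mem_filter.mp hk).2 (Finset.mem_filter.mp hk').2
    have h2 : ∑ k ∈ Finset.filter (fun k : 𝓞 K => ¬ ((0:ℝ) < ((k:K):ℝ))) F,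
        q ^ (ν k).natAbs ≤ T := by
      apply hXbound _ (Finset.filter_subset _ _)
      intro k hk k' hk'
      exact iff_of_false (Finset.mem_filter.mp hk).2 (Finset.mem_filter.mp hk').2
    linarith
  -- term bound
  have hterm : ∀ k ∈ F,
      fwt C (((k:K):ℝ)/Real.sqrt N) * fwt C (σ₂ ((k:K)) / Real.sqrt N) ≤
        Real.pi ^ C * r ^ C * (q⁻¹ * q ^ (ν k).natAbs) := by
    intro k hk
    exact term_bound C N Nm lam hN0 hNm0 hlam ((k:K):ℝ) (σ₂ (k:K))
      (hFne k hk) (hFabs k hk)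
  calc ∑ k ∈ s, (if Ideal.span {k} = n then
        fwt C (((k : K) : ℝ) / Real.sqrt N) * fwt C (σ₂ (k : K) / Real.sqrt N) else 0)
      = ∑ k ∈ F, fwt C (((k : K) : ℝ) / Real.sqrt N) * fwt C (σ₂ (k : K) / Real.sqrt N) :=
        (Finset.sum_filter _ _).symm
    _ ≤ ∑ k ∈ F, Real.pi ^ C * r ^ C * (q⁻¹ * q ^ (ν k).natAbs) :=
        Finset.sum_le_sum hterm
    _ = Real.pi ^ C * r ^ C * q⁻¹ * ∑ k ∈ F, q ^ (ν k).natAbs := by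
        rw [Finset.mul_sum]
        apply Finset.sum_congr rfl
        intro k _
        ring
    _ ≤ Real.pi ^ C * r ^ C * q⁻¹ * (2 * T) := by
        apply mul_le_mul_of_nonneg_left hFsum (by positivity)
    _ = Real.pi ^ C * (q⁻¹ * (2 * T)) * r ^ C := by ring
end

section
/- Let 𝕂 be an imaginary quadratic number field of class number one, and for N ≥ 3 define W : ℐ → ℝ by W(𝔫) := π·exp(−π·𝒩(𝔫)/N). Fix ξ ∈ (0,1). Then there is a constant c = c(ξ, 𝕂) such that for all N ≥ 3 and all nonzero ideals 𝔯 with 𝒩(𝔯) ≤ N/2, setting Ñ := N·(log N)^ξ, one has ∑_{𝔞∈ℐ, 𝒩(𝔞𝔯) > Ñ} W(𝔞𝔯) ≤ c · (N/𝒩(𝔯)) · exp(−(log N)^{ξ/2}). -/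
open NumberField

open scoped Classical

section Aux

variable {K : Type*} [Field K] [NumberField K]

/-- In an imaginary quadratic field, the rational norm of an element is the square of the
complex absolute value of its image under any complex embedding. -/
lemma exists_embedding_norm_eq (hdeg : Module.finrank ℚ K = 2)
    (himag : IsEmpty (K →+* ℝ)) :
    ∃ σ : K →+* ℂ, ∀ x : K, ((Algebra.norm ℚ x : ℚ) : ℝ) = Complex.normSq (σ x) := by
  have hcard : Fintype.card (K →+* ℂ) = 2 := by
    rw [NumberField.Embeddings.card K ℂ, hdeg]
  have hne' : Nonempty (K →+* ℂ) := Fintype.card_pos_iff.mp (by omega)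
  obtain ⟨σ⟩ := hne'
  refine ⟨σ, fun x => ?_⟩
  set τ := NumberField.ComplexEmbedding.conjugate σ with hτ
  have hne : σ ≠ τ := by
    intro h
    have hreal : NumberField.ComplexEmbedding.IsReal σ :=
      NumberField.ComplexEmbedding.isReal_iff.mpr h.symm
    exact himag.elim hreal.embedding
  have huniv : (Finset.univ : Finset (K →+* ℂ)) = {σ, τ} := by
    symm
    apply Finset.eq_univ_of_card
    rw [Finset.card_pair hne, hcard]
  have hprod : (algebraMap ℚ ℂ) (Algebra.norm ℚ x) = σ x * τ x := by
    rw [Algebra.norm_eq_prod_embeddings]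
    rw [← Fintype.prod_equiv (RingHom.equivRatAlgHom K ℂ) (fun ψ : K →+* ℂ => ψ x)
      (fun φ : K →ₐ[ℚ] ℂ => φ x) (fun ψ => rfl)]
    rw [huniv, Finset.prod_pair hne]
  have hτx : τ x = (starRingEnd ℂ) (σ x) :=
    NumberField.ComplexEmbedding.conjugate_coe_eq σ x
  have : ((Algebra.norm ℚ x : ℚ) : ℂ) = ((Complex.normSq (σ x) : ℝ) : ℂ) := by
    rw [← Complex.mul_conj, ← hτx, ← hprod, eq_ratCast]
  exact_mod_cast this

variable (σ : K →+* ℂ)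

/-- The absolute norm of a principal ideal equals `normSq` of the embedded generator. -/
lemma absNorm_span_eq
    (hσ : ∀ x : K, ((Algebra.norm ℚ x : ℚ) : ℝ) = Complex.normSq (σ x)) (α : 𝓞 K) :
    ((Ideal.absNorm (Ideal.span {α}) : ℕ) : ℝ) =
      Complex.normSq (σ (algebraMap (𝓞 K) K α)) := by
  rw [Ideal.absNorm_span_singleton]
  have h1 : ((Algebra.norm ℤ α : ℤ) : ℚ) = Algebra.norm ℚ (algebraMap (𝓞 K) K α) :=
    Algebra.coe_norm_int α
  have h2 : ((Algebra.norm ℤ α : ℤ) : ℝ) = Complex.normSq (σ (algebraMap (𝓞 K) K α)) := by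
    have h3 := hσ (algebraMap (𝓞 K) K α)
    rw [← h1] at h3
    exact_mod_cast h3
  rw [Nat.cast_natAbs, Int.cast_abs, h2, abs_of_nonneg (Complex.normSq_nonneg _)]

lemma one_le_normSq
    (hσ : ∀ x : K, ((Algebra.norm ℚ x : ℚ) : ℝ) = Complex.normSq (σ x))
    {α : 𝓞 K} (hα : α ≠ 0) : 1 ≤ Complex.normSq (σ (algebraMap (𝓞 K) K α)) := by
  rw [← absNorm_span_eq σ hσ α]
  have : Ideal.span {α} ≠ (⊥ : Ideal (𝓞 K)) := by
    simpa [Ideal.span_singleton_eq_bot] using hα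
  have h0 : Ideal.absNorm (Ideal.span {α}) ≠ 0 := by
    simpa [Ideal.absNorm_eq_zero_iff] using this
  exact_mod_cast Nat.one_le_iff_ne_zero.mpr h0

lemma one_le_dist
    (hσ : ∀ x : K, ((Algebra.norm ℚ x : ℚ) : ℝ) = Complex.normSq (σ x))
    {α β : 𝓞 K} (hαβ : α ≠ β) :
    1 ≤ ‖σ (algebraMap (𝓞 K) K α) - σ (algebraMap (𝓞 K) K β)‖ := by
  have h := one_le_normSq σ hσ (sub_ne_zero.mpr hαβ)
  rw [map_sub, map_sub] at h
  set z := σ (algebraMap (𝓞 K) K α) - σ (algebraMap (𝓞 K) K β)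
  have hz : 1 ≤ ‖z‖ ^ 2 := by rwa [Complex.sq_norm]
  nlinarith [norm_nonneg z]

end Aux

/-- Packing bound: a finite `1`-separated set of points of modulus at most `R ≥ 1` in `ℂ`
has at most `9 R ^ 2` elements. -/
lemma packing_bound (G : Finset ℂ) (R : ℝ) (hR : 1 ≤ R)
    (hb : ∀ z ∈ G, ‖z‖ ≤ R)
    (hd : ∀ z ∈ G, ∀ w ∈ G, z ≠ w → 1 ≤ ‖z - w‖) :
    (G.card : ℝ) ≤ 9 * R ^ 2 := by
  have hdisj : (↑G : Set ℂ).PairwiseDisjoint (fun z => Metric.ball z (1 / 2)) := by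
    intro z hz w hw hzw
    apply Metric.ball_disjoint_ball
    rw [Complex.dist_eq]
    have := hd z hz w hw hzw
    linarith
  have hmeas := MeasureTheory.measure_biUnion_finset (μ := MeasureTheory.volume) hdisj
    (fun z _ => measurableSet_ball)
  have hsub : (⋃ z ∈ G, Metric.ball z (1 / 2)) ⊆ Metric.ball 0 (R + 1 / 2) := by
    intro w hw
    simp only [Set.mem_iUnion] at hw
    obtain ⟨z, hz, hwz⟩ := hw
    rw [Metric.mem_ball] at *
    have h1 := hb z hz
    have h2 : dist z 0 ≤ R := by
      rw [Complex.dist_eq, sub_zero]; exact h1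
    calc dist w 0 ≤ dist w z + dist z 0 := dist_triangle _ _ _
      _ < 1 / 2 + R := add_lt_add_of_lt_of_le hwz h2
      _ = R + 1 / 2 := by ring
  have hle := (hmeas ▸ MeasureTheory.measure_mono hsub).trans_eq
    (Complex.volume_ball 0 (R + 1 / 2))
  simp_rw [Complex.volume_ball, Finset.sum_const, nsmul_eq_mul] at hle
  have hpine : ((NNReal.pi : ENNReal)) ≠ 0 := by
    simp [← NNReal.coe_eq_zero, Real.pi_ne_zero]
  have hpitop : ((NNReal.pi : ENNReal)) ≠ ⊤ := ENNReal.coe_ne_top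
  rw [← mul_assoc] at hle
  have hle2 : (G.card : ENNReal) * ENNReal.ofReal (1 / 2) ^ 2 ≤
      ENNReal.ofReal (R + 1 / 2) ^ 2 :=
    (ENNReal.mul_le_mul_iff_left hpine hpitop).mp hle
  have hle3 : (G.card : ℝ) * (1 / 2 : ℝ) ^ 2 ≤ (R + 1 / 2) ^ 2 := by
    rw [← ENNReal.ofReal_pow (by norm_num : (0:ℝ) ≤ 1/2),
      ← ENNReal.ofReal_pow (by linarith : (0:ℝ) ≤ R + 1/2),
      ← ENNReal.ofReal_natCast G.card,
      ← ENNReal.ofReal_mul (by positivity),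
      ENNReal.ofReal_le_ofReal_iff (by positivity)] at hle2
    exact hle2
  nlinarith [hle3, hR]

section Theta

variable {K : Type*} [Field K] [NumberField K] (σ : K →+* ℂ)

lemma count_bound
    (hσ : ∀ x : K, ((Algebra.norm ℚ x : ℚ) : ℝ) = Complex.normSq (σ x))
    (x : ℝ) (hx : 1 ≤ x) (G : Finset (𝓞 K))
    (hG : ∀ α ∈ G, Complex.normSq (σ (algebraMap (𝓞 K) K α)) ≤ x) :
    (G.card : ℝ) ≤ 9 * x := by
  set emb : 𝓞 K → ℂ := fun α => σ (algebraMap (𝓞 K) K α) with hemb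
  have hinj : Function.Injective emb := by
    intro a b hab
    have : algebraMap (𝓞 K) K a = algebraMap (𝓞 K) K b := σ.injective hab
    exact IsFractionRing.injective (𝓞 K) K this
  have hcard : (G.image emb).card = G.card := Finset.card_image_of_injective G hinj
  have hbound : ((G.image emb).card : ℝ) ≤ 9 * Real.sqrt x ^ 2 := by
    apply packing_bound _ (Real.sqrt x) (by
      rw [show (1:ℝ) = Real.sqrt 1 by simp]
      exact Real.sqrt_le_sqrt hx)
    · intro z hz
      obtain ⟨α, hα, rfl⟩ := Finset.mem_image.mp hz
      rw [Complex.norm_def]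
      exact Real.sqrt_le_sqrt (hG α hα)
    · intro z hz w hw hzw
      obtain ⟨α, hα, rfl⟩ := Finset.mem_image.mp hz
      obtain ⟨β, hβ, rfl⟩ := Finset.mem_image.mp hw
      exact one_le_dist σ hσ (fun h => hzw (by rw [h]))
  rw [hcard, Real.sq_sqrt (by linarith)] at hbound
  exact hbound

/-- The theta-series bound: a sum of `exp (-(t * q α))` over a finite set of nonzero
integers is at most `25 / t`, where `q` is the normSq of the embedding. -/
lemma theta_bound
    (hσ : ∀ x : K, ((Algebra.norm ℚ x : ℚ) : ℝ) = Complex.normSq (σ x))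
    (t : ℝ) (ht : 0 < t) (ht1 : t ≤ 1) (G : Finset (𝓞 K)) (hG : (0 : 𝓞 K) ∉ G) :
    ∑ α ∈ G, Real.exp (-(t * Complex.normSq (σ (algebraMap (𝓞 K) K α)))) ≤ 25 / t := by
  set q : 𝓞 K → ℝ := fun α => Complex.normSq (σ (algebraMap (𝓞 K) K α)) with hq
  set n : 𝓞 K → ℕ := fun α => ⌊q α⌋₊ with hn
  set x : ℝ := Real.exp (-t) with hx
  have hx0 : 0 < x := Real.exp_pos _
  have hx1 : x < 1 := Real.exp_lt_one_iff.mpr (by linarith)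
  have h1x : 0 < 1 - x := by linarith
  -- step 1 : pointwise bound by x ^ n α
  have step1 : ∀ α ∈ G, Real.exp (-(t * q α)) ≤ x ^ n α := by
    intro α _
    rw [hx, ← Real.exp_nat_mul]
    apply Real.exp_le_exp.mpr
    have := Nat.floor_le (Complex.normSq_nonneg (σ (algebraMap (𝓞 K) K α)) :
      (0:ℝ) ≤ q α)
    nlinarith
  -- the conditional geometric series
  have step2 : ∀ α : 𝓞 K, HasSum (fun m : ℕ => if n α ≤ m then x ^ m else 0)
      (x ^ n α * (1 - x)⁻¹) := by
    intro α
    have base : HasSum (fun j : ℕ => x ^ n α * x ^ j) (x ^ n α * (1 - x)⁻¹) :=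
      (hasSum_geometric_of_lt_one hx0.le hx1).mul_left _
    have hi : Function.Injective (fun j : ℕ => n α + j) := fun a b h =>
      Nat.add_left_cancel h
    have hsupp : ∀ m : ℕ, m ∉ Set.range (fun j : ℕ => n α + j) →
        (if n α ≤ m then x ^ m else 0) = 0 := by
      intro m hm
      rw [if_neg]
      intro hle
      exact hm ⟨m - n α, by show n α + (m - n α) = m; omega⟩
    apply (Function.Injective.hasSum_iff hi hsupp).mp
    convert base using 1
    funext j
    simp [pow_add]
  -- counting bound for the level sets
  have count : ∀ m : ℕ, ((G.filter (fun α => n α ≤ m)).card : ℝ) ≤ 9 * (m + 1) := by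
    intro m
    apply count_bound σ hσ (m + 1 : ℝ) (by exact_mod_cast Nat.one_le_iff_ne_zero.mpr (by omega))
    intro α hα
    obtain ⟨_, hle⟩ := Finset.mem_filter.mp hα
    have h2 : q α < n α + 1 := Nat.lt_floor_add_one _
    have : (n α : ℝ) ≤ m := by exact_mod_cast hle
    calc Complex.normSq (σ (algebraMap (𝓞 K) K α)) = q α := rfl
      _ ≤ (m : ℝ) + 1 := by linarith
  -- inner sums
  have hinner : ∀ m : ℕ, ∑ α ∈ G, (if n α ≤ m then x ^ m else 0) ≤ 9 * ((m : ℝ) + 1) * x ^ m := by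
    intro m
    rw [← Finset.sum_filter, Finset.sum_const, nsmul_eq_mul]
    have := count m
    have hxm : (0:ℝ) ≤ x ^ m := by positivity
    nlinarith
  have hsummable : ∀ α ∈ G, Summable (fun m : ℕ => if n α ≤ m then x ^ m else 0) :=
    fun α _ => (step2 α).summable
  -- the dominating series
  have habs : ‖x‖ < 1 := by rw [Real.norm_eq_abs, abs_of_pos hx0]; exact hx1
  have hgsum : HasSum (fun m : ℕ => 9 * ((m : ℝ) + 1) * x ^ m)
      (9 * (x / (1 - x) ^ 2 + (1 - x)⁻¹)) := by
    have h1 : HasSum (fun m : ℕ => (m : ℝ) * x ^ m) (x / (1 - x) ^ 2) :=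
      hasSum_coe_mul_geometric_of_norm_lt_one habs
    have h2 : HasSum (fun m : ℕ => x ^ m) ((1 - x)⁻¹) :=
      hasSum_geometric_of_lt_one hx0.le hx1
    have := (h1.add h2).mul_left 9
    have e : (fun m : ℕ => 9 * ((m : ℝ) + 1) * x ^ m) = fun i : ℕ => 9 * ((i : ℝ) * x ^ i + x ^ i) := by
      funext m
      ring
    rw [e]
    exact this
  calc ∑ α ∈ G, Real.exp (-(t * q α)) ≤ ∑ α ∈ G, x ^ n α := Finset.sum_le_sum step1
    _ = (1 - x) * ∑ α ∈ G, x ^ n α * (1 - x)⁻¹ := by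
        rw [Finset.mul_sum]
        apply Finset.sum_congr rfl
        intro α _
        field_simp
    _ = (1 - x) * ∑ α ∈ G, ∑' m : ℕ, (if n α ≤ m then x ^ m else 0) := by
        congr 1
        exact Finset.sum_congr rfl fun α _ => ((step2 α).tsum_eq).symm
    _ = (1 - x) * ∑' m : ℕ, ∑ α ∈ G, (if n α ≤ m then x ^ m else 0) := by
        rw [Summable.tsum_finsetSum hsummable]
    _ ≤ (1 - x) * ∑' m : ℕ, 9 * ((m : ℝ) + 1) * x ^ m := by
        apply mul_le_mul_of_nonneg_left _ h1x.le
        apply Summable.tsum_le_tsum hinner _ hgsum.summable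
        · apply Summable.of_nonneg_of_le _ hinner hgsum.summable
          intro m
          apply Finset.sum_nonneg
          intro α _
          split <;> positivity
    _ = (1 - x) * (9 * (x / (1 - x) ^ 2 + (1 - x)⁻¹)) := by rw [hgsum.tsum_eq]
    _ = 9 / (1 - x) := by field_simp; ring
    _ ≤ 25 / t := by
        -- 1 - x ≥ t / (1 + t) ≥ t / 2
        have h5 : x * (1 + t) ≤ 1 := by
          have h6 := Real.add_one_le_exp t
          have h7 : x * (1 + t) ≤ x * Real.exp t := by nlinarith
          have h8 : x * Real.exp t = 1 := by rw [hx, ← Real.exp_add]; simp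
          linarith
        have hxle : x ≤ 1 / (1 + t) := by
          rw [le_div_iff₀ (by linarith : (0:ℝ) < 1 + t)]
          exact h5
        have h2 : t / 2 ≤ 1 - x := by
          have : t / (1 + t) ≤ 1 - x := by
            have h3 : 1 - 1 / (1 + t) = t / (1 + t) := by field_simp; ring
            linarith [hxle, h3.symm.le]
          have h4 : t / 2 ≤ t / (1 + t) := by
            apply div_le_div_of_nonneg_left ht.le (by linarith) (by linarith)
          linarith
        rw [div_le_div_iff₀ h1x ht]
        nlinarith
end Theta

set_option maxHeartbeats 2000000 in
/-- **Tail bound for the Gaussian weight in imaginary quadratic fields:**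
with `W(𝔫) = π exp(−π 𝒩(𝔫)/N)` and `Ñ = N (log N)^ξ`, for all `N ≥ 3` and nonzero
ideals `𝔯` with `𝒩(𝔯) ≤ N/2`, one has
`∑_{𝔞∈ℐ, 𝒩(𝔞𝔯) > Ñ} W(𝔞𝔯) ≤ c (N/𝒩(𝔯)) exp(−(log N)^{ξ/2})`. -/
theorem gaussian_weight_tail_bound
    (K : Type*) [Field K] [NumberField K]
    (hdeg : Module.finrank ℚ K = 2)
    (himag : IsEmpty (K →+* ℝ))
    (hclass : NumberField.classNumber K = 1)
    (ξ : ℝ) (hξ : 0 < ξ) (hξ1 : ξ < 1) :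
    ∃ c : ℝ, ∀ N : ℝ, 3 ≤ N → ∀ r : Ideal (𝓞 K), r ≠ ⊥ → (Ideal.absNorm r : ℝ) ≤ N / 2 →
      (∑' a : Ideal (𝓞 K),
          if a ≠ ⊥ ∧ N * (Real.log N) ^ ξ < (Ideal.absNorm (a * r) : ℝ) then
            Real.pi * Real.exp (-Real.pi * (Ideal.absNorm (a * r) : ℝ) / N) else 0)
        ≤ c * (N / (Ideal.absNorm r : ℝ)) * Real.exp (-(Real.log N) ^ (ξ / 2)) := by
  obtain ⟨σ, hσ⟩ := exists_embedding_norm_eq hdeg himag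
  have hPIR : IsPrincipalIdealRing (𝓞 K) := NumberField.classNumber_eq_one_iff.mp hclass
  have hprin : ∀ a : Ideal (𝓞 K), ∃ gg : 𝓞 K, a = Ideal.span {gg} := by
    intro a
    obtain ⟨gg, hgg⟩ := (IsPrincipalIdealRing.principal a).principal
    exact ⟨gg, by simpa [Ideal.submodule_span_eq] using hgg⟩
  choose g hg using hprin
  refine ⟨50, fun N hN r hr hNr => ?_⟩
  have hNpos : (0:ℝ) < N := by linarith
  have hNrpos : (0:ℝ) < (Ideal.absNorm r : ℝ) := by
    have h0 : Ideal.absNorm r ≠ 0 := by simpa [Ideal.absNorm_eq_zero_iff] using hr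
    exact_mod_cast Nat.pos_of_ne_zero h0
  set Nr : ℝ := (Ideal.absNorm r : ℝ) with hNrdef
  have hlogN : 1 ≤ Real.log N := by
    rw [Real.le_log_iff_exp_le hNpos]
    calc Real.exp 1 ≤ 2.7182818286 := Real.exp_one_lt_d9.le
      _ ≤ N := by linarith
  set L : ℝ := Real.log N ^ ξ with hL
  have hL0 : 0 ≤ L := Real.rpow_nonneg (by linarith) _
  have hπ := Real.pi_pos
  set t : ℝ := Real.pi * Nr / (2 * N) with ht
  have ht0 : 0 < t := by rw [ht]; positivity
  have ht1 : t ≤ 1 := by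
    rw [ht, div_le_one (by positivity)]
    nlinarith [Real.pi_le_four]
  have hExp : Real.exp (-(Real.pi / 2 * L)) ≤ Real.exp (-(Real.log N ^ (ξ / 2))) := by
    apply Real.exp_le_exp.mpr
    have h1 : Real.log N ^ (ξ / 2) ≤ L := Real.rpow_le_rpow_of_exponent_le hlogN (by linarith)
    have h2 : L ≤ Real.pi / 2 * L := by nlinarith [Real.two_le_pi]
    linarith
  apply tsum_le_of_sum_le' (by positivity)
  intro u
  rw [← Finset.sum_filter]
  set F := u.filter (fun a : Ideal (𝓞 K) =>
      a ≠ ⊥ ∧ N * Real.log N ^ ξ < (Ideal.absNorm (a * r) : ℝ)) with hF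
  set E : ℝ := Real.exp (-(Real.pi / 2 * L)) with hE
  have hE0 : 0 < E := Real.exp_pos _
  -- pointwise bound on F
  have key : ∀ a ∈ F, Real.pi * Real.exp (-Real.pi * (Ideal.absNorm (a * r) : ℝ) / N) ≤
      Real.pi * E * Real.exp (-(t * Complex.normSq (σ (algebraMap (𝓞 K) K (g a))))) := by
    intro a haF
    have hmem := Finset.mem_filter.mp haF
    have hbot := hmem.2.1
    have hcond := hmem.2.2
    have hqa : (Ideal.absNorm a : ℝ) = Complex.normSq (σ (algebraMap (𝓞 K) K (g a))) := by
      conv_lhs => rw [hg a]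
      exact_mod_cast absNorm_span_eq σ hσ (g a)
    have hNar : ((Ideal.absNorm (a * r) : ℕ) : ℝ) = (Ideal.absNorm a : ℝ) * Nr := by
      rw [map_mul Ideal.absNorm a r]
      push_cast
      rfl
    set Nar : ℝ := ((Ideal.absNorm (a * r) : ℕ) : ℝ) with hNardef
    have e1 : -Real.pi * Nar / N = -(Real.pi * Nar / (2 * N)) + -(Real.pi * Nar / (2 * N)) := by
      field_simp
      ring
    have e2 : Real.pi * Nar / (2 * N) = t * Complex.normSq (σ (algebraMap (𝓞 K) K (g a))) := by
      rw [ht, ← hqa, hNar]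
      field_simp
    have e3 : Real.pi / 2 * L ≤ Real.pi * Nar / (2 * N) := by
      rw [le_div_iff₀ (by positivity : (0:ℝ) < 2 * N)]
      nlinarith [mul_lt_mul_of_pos_left hcond hπ]
    rw [e1, Real.exp_add, ← mul_assoc, e2]
    gcongr
    rw [hE]
    apply Real.exp_le_exp.mpr
    have e4 : Real.pi / 2 * L ≤ t * Complex.normSq (σ ((algebraMap (𝓞 K) K) (g a))) :=
      e2 ▸ e3
    linarith
  have hginj : ∀ a ∈ F, ∀ b ∈ F, g a = g b → a = b := by
    intro a _ b _ hab
    rw [hg a, hg b, hab]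
  have h0notin : (0 : 𝓞 K) ∉ F.image g := by
    intro h0
    obtain ⟨a, haF, h0a⟩ := Finset.mem_image.mp h0
    have hbot := (Finset.mem_filter.mp haF).2.1
    apply hbot
    rw [hg a, h0a]
    simp
  have htheta := theta_bound σ hσ t ht0 ht1 (F.image g) h0notin
  calc ∑ a ∈ F, (Real.pi * Real.exp (-Real.pi * (Ideal.absNorm (a * r) : ℝ) / N))
      ≤ ∑ a ∈ F, Real.pi * E *
          Real.exp (-(t * Complex.normSq (σ (algebraMap (𝓞 K) K (g a))))) :=
        Finset.sum_le_sum key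
    _ = Real.pi * E * ∑ a ∈ F,
          Real.exp (-(t * Complex.normSq (σ (algebraMap (𝓞 K) K (g a))))) := by
        rw [Finset.mul_sum]
    _ = Real.pi * E * ∑ β ∈ F.image g,
          Real.exp (-(t * Complex.normSq (σ (algebraMap (𝓞 K) K β)))) := by
        rw [Finset.sum_image hginj]
    _ ≤ Real.pi * E * (25 / t) := by
        apply mul_le_mul_of_nonneg_left htheta (by positivity)
    _ = 50 * (N / Nr) * E := by
        rw [ht]
        field_simp
        ring
    _ ≤ 50 * (N / Nr) * Real.exp (-(Real.log N ^ (ξ / 2))) := by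
        apply mul_le_mul_of_nonneg_left hExp (by positivity)
end

section
/- Fix 𝒞 ∈ ℕ, a real number t > 1 and y ∈ ℝ. Let f(x) := (exp(−πx²) − exp(−2πx²))^𝒞 and F_y(x) := f(t^y·√x)·f(t^{−y}·√x) for x ≥ 0. Then for every complex s with Re(s) > 0, the Mellin transform of F_y satisfies ∫_0^∞ x^{s−1}·F_y(x) dx = π^{−s}·Γ(s)·∑_{a=𝒞}^{2𝒞} ∑_{b=𝒞}^{2𝒞} (−1)^{a+b} · binom(𝒞, 2𝒞−a) · binom(𝒞, 2𝒞−b) · (a·t^{2y} + b·t^{−2y})^{−s}. -/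
open MeasureTheory

open Set Complex

lemma aux_int (s : ℂ) (hs : 0 < s.re) {r : ℝ} (hr : 0 < r) :
    IntegrableOn (fun x : ℝ => (x : ℂ) ^ (s - 1) * Complex.exp (-(r * x))) (Set.Ioi 0) := by
  have := Complex.GammaIntegral_convergent hs
  rw [← mul_zero r, ← integrableOn_Ioi_comp_mul_left_iff _ _ hr] at this
  have hrne : (r : ℂ) ^ (s - 1) ≠ 0 := by
    simp [Complex.cpow_eq_zero_iff, Complex.ofReal_ne_zero.mpr hr.ne']
  refine IntegrableOn.congr_fun (this.const_mul (1 / (r : ℂ) ^ (s - 1)))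
    (fun x hx => ?_) measurableSet_Ioi
  have hx' : (0:ℝ) < x := hx
  rw [Complex.ofReal_mul, mul_cpow_ofReal_nonneg hr.le hx'.le, Complex.ofReal_exp]
  push_cast
  field_simp

lemma fwt_expand (C : ℕ) (u : ℝ) :
    fwt C u = ∑ k ∈ Finset.range (C+1),
      (-1:ℝ)^(k+C) * (C.choose k : ℝ) * Real.exp (-(Real.pi * ((2*C - k : ℕ) : ℝ) * u^2)) := by
  rw [fwt, sub_pow]
  refine Finset.sum_congr rfl fun k hk => ?_
  rw [Finset.mem_range, Nat.lt_succ_iff] at hk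
  rw [← Real.exp_nat_mul, ← Real.exp_nat_mul, mul_assoc ((-1:ℝ)^(k+C)), ← Real.exp_add]
  have h1 : ((C - k : ℕ) : ℝ) = (C : ℝ) - k := by exact Nat.cast_sub hk
  have h2 : ((2*C - k : ℕ) : ℝ) = 2*(C:ℝ) - k := by
    rw [Nat.cast_sub (by omega)]; push_cast; ring
  rw [show (k:ℝ) * (-Real.pi * u^2) + ((C - k : ℕ):ℝ) * (-2 * Real.pi * u^2)
      = -(Real.pi * ((2*C - k : ℕ):ℝ) * u^2) by rw [h1, h2]; ring]
  ring

lemma Fy_expand (C : ℕ) {t : ℝ} (ht0 : 0 < t) (y : ℝ) {x : ℝ} (hx : 0 < x) :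
    fwt C (t ^ y * Real.sqrt x) * fwt C (t ^ (-y) * Real.sqrt x)
      = ∑ k ∈ Finset.range (C+1), ∑ l ∈ Finset.range (C+1),
        (-1:ℝ)^(k+l) * (C.choose k : ℝ) * (C.choose l : ℝ) *
          Real.exp (-(Real.pi * (((2*C-k:ℕ):ℝ) * t^(2*y) + ((2*C-l:ℕ):ℝ) * t^(-(2*y))) * x)) := by
  have hsq : ∀ z : ℝ, (t ^ z * Real.sqrt x)^2 = t^(2*z) * x := by
    intro z
    rw [mul_pow, Real.sq_sqrt hx.le, ← Real.rpow_natCast (t^z) 2, ← Real.rpow_mul ht0.le]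
    norm_num [mul_comm]
  rw [fwt_expand, fwt_expand, Finset.sum_mul_sum]
  refine Finset.sum_congr rfl fun k hk => Finset.sum_congr rfl fun l hl => ?_
  rw [show ((-1:ℝ)^(k+C) * (C.choose k : ℝ) * Real.exp (-(Real.pi * ((2*C - k : ℕ) : ℝ) * (t ^ y * Real.sqrt x)^2))) *
        ((-1:ℝ)^(l+C) * (C.choose l : ℝ) * Real.exp (-(Real.pi * ((2*C - l : ℕ) : ℝ) * (t ^ (-y) * Real.sqrt x)^2)))
      = ((-1:ℝ)^(k+C) * (-1:ℝ)^(l+C)) * ((C.choose k : ℝ) * (C.choose l : ℝ)) *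
        (Real.exp (-(Real.pi * ((2*C - k : ℕ) : ℝ) * (t ^ y * Real.sqrt x)^2)) *
         Real.exp (-(Real.pi * ((2*C - l : ℕ) : ℝ) * (t ^ (-y) * Real.sqrt x)^2))) by ring]
  rw [← Real.exp_add, hsq y, hsq (-y)]
  rw [show ((-1:ℝ))^(k+C) * (-1:ℝ)^(l+C) = (-1:ℝ)^(k+l) by
    rw [← pow_add, show (k+C)+(l+C) = (k+l) + 2*C by ring, pow_add, pow_mul]; simp]
  rw [show (2:ℝ) * (-y) = -(2*y) by ring]
  rw [show -(Real.pi * ((2*C - k : ℕ) : ℝ) * (t^(2*y) * x)) + -(Real.pi * ((2*C - l : ℕ) : ℝ) * (t^(-(2*y)) * x))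
      = -(Real.pi * (((2*C-k:ℕ):ℝ) * t^(2*y) + ((2*C-l:ℕ):ℝ) * t^(-(2*y))) * x) by ring]
  ring
/-- **Mellin transform of `F_y(x) = f(t^y √x) f(t^{−y} √x)`:** for `Re s > 0`,
`∫_0^∞ x^{s−1} F_y(x) dx = π^{−s} Γ(s) ∑_{a=𝒞}^{2𝒞} ∑_{b=𝒞}^{2𝒞} (−1)^{a+b}
binom(𝒞,2𝒞−a) binom(𝒞,2𝒞−b) (a t^{2y} + b t^{−2y})^{−s}`. -/
theorem mellin_transform_Fy
    (C : ℕ) (hC : 0 < C) (t : ℝ) (ht : 1 < t) (y : ℝ) (s : ℂ) (hs : 0 < s.re) :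
    (∫ x in Set.Ioi (0 : ℝ), (x : ℂ) ^ (s - 1) *
        ((fwt C (t ^ y * Real.sqrt x) * fwt C (t ^ (-y) * Real.sqrt x) : ℝ) : ℂ))
      = (Real.pi : ℂ) ^ (-s) * Complex.Gamma s *
        ∑ a ∈ Finset.Icc C (2*C), ∑ b ∈ Finset.Icc C (2*C),
          (-1 : ℂ)^(a+b) * (C.choose (2*C - a)) * (C.choose (2*C - b)) *
            (((a : ℝ) * t ^ (2*y) + (b : ℝ) * t ^ (-(2*y)) : ℝ) : ℂ) ^ (-s) := by
  have ht0 : (0:ℝ) < t := lt_trans zero_lt_one ht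
  set w : ℕ → ℕ → ℝ := fun k l => ((2*C-k:ℕ):ℝ) * t^(2*y) + ((2*C-l:ℕ):ℝ) * t^(-(2*y)) with hw
  have hwpos : ∀ k ∈ Finset.range (C+1), ∀ l ∈ Finset.range (C+1), 0 < w k l := by
    intro k hk l hl
    rw [Finset.mem_range, Nat.lt_succ_iff] at hk hl
    have h1 : (0:ℝ) < ((2*C-k:ℕ):ℝ) := by exact_mod_cast Nat.pos_of_ne_zero (by omega)
    have h2 : (0:ℝ) < ((2*C-l:ℕ):ℝ) := by exact_mod_cast Nat.pos_of_ne_zero (by omega)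
    have := Real.rpow_pos_of_pos ht0 (2*y)
    have := Real.rpow_pos_of_pos ht0 (-(2*y))
    positivity
  set c : ℕ → ℕ → ℂ := fun k l => (-1:ℂ)^(k+l) * (C.choose k : ℂ) * (C.choose l : ℂ) with hc
  -- Step 1: rewrite the integrand
  have key : ∀ x ∈ Set.Ioi (0:ℝ), (x : ℂ) ^ (s - 1) *
        ((fwt C (t ^ y * Real.sqrt x) * fwt C (t ^ (-y) * Real.sqrt x) : ℝ) : ℂ)
      = ∑ k ∈ Finset.range (C+1), ∑ l ∈ Finset.range (C+1),
          c k l * ((x : ℂ) ^ (s - 1) * Complex.exp (-((Real.pi * w k l : ℝ) * x))) := by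
    intro x hx
    rw [Fy_expand C ht0 y hx, Complex.ofReal_sum, Finset.mul_sum]
    refine Finset.sum_congr rfl fun k hk => ?_
    rw [Complex.ofReal_sum, Finset.mul_sum]
    refine Finset.sum_congr rfl fun l hl => ?_
    rw [show -((((Real.pi * w k l : ℝ)) : ℂ) * (x : ℂ))
        = ((-(Real.pi * w k l * x) : ℝ) : ℂ) by push_cast; ring, ← Complex.ofReal_exp]
    rw [hc]
    simp only [hw]
    push_cast [-Complex.ofReal_exp]
    ring
  rw [setIntegral_congr_fun measurableSet_Ioi key]
  -- Step 2: integrate term by term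
  have hint : ∀ k ∈ Finset.range (C+1), ∀ l ∈ Finset.range (C+1),
      IntegrableOn (fun x : ℝ => c k l * ((x : ℂ) ^ (s - 1) *
        Complex.exp (-((Real.pi * w k l : ℝ) * x)))) (Set.Ioi 0) := by
    intro k hk l hl
    exact (aux_int s hs (mul_pos Real.pi_pos (hwpos k hk l hl))).const_mul _
  rw [integral_finset_sum _ (fun k hk => integrable_finset_sum _ (fun l hl => hint k hk l hl))]
  have step : ∀ k ∈ Finset.range (C+1),
      (∫ x in Set.Ioi (0:ℝ), ∑ l ∈ Finset.range (C+1),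
        c k l * ((x : ℂ) ^ (s - 1) * Complex.exp (-((Real.pi * w k l : ℝ) * x))))
      = ∑ l ∈ Finset.range (C+1),
          c k l * ((Real.pi : ℂ) ^ (-s) * ((w k l : ℝ) : ℂ) ^ (-s) * Complex.Gamma s) := by
    intro k hk
    rw [integral_finset_sum _ (fun l hl => hint k hk l hl)]
    refine Finset.sum_congr rfl fun l hl => ?_
    rw [integral_const_mul, Complex.integral_cpow_mul_exp_neg_mul_Ioi hs
      (mul_pos Real.pi_pos (hwpos k hk l hl))]
    have hwl := hwpos k hk l hl
    have harg : Complex.arg ((Real.pi * w k l : ℝ) : ℂ) ≠ Real.pi := by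
      rw [Complex.arg_ofReal_of_nonneg (mul_pos Real.pi_pos hwl).le]
      exact Real.pi_pos.ne
    rw [one_div, Complex.inv_cpow _ _ harg, ← Complex.cpow_neg, Complex.ofReal_mul,
      mul_cpow_ofReal_nonneg Real.pi_pos.le hwl.le]
  rw [Finset.sum_congr rfl step]
  -- Step 3: reindex the RHS
  have hre : ∀ (g : ℕ → ℂ), ∑ a ∈ Finset.Icc C (2*C), g a
      = ∑ k ∈ Finset.range (C+1), g (2*C - k) := by
    intro g
    refine Finset.sum_nbij' (fun a => 2*C - a) (fun k => 2*C - k) ?_ ?_ ?_ ?_ ?_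
    · intro a ha; simp only [Finset.mem_Icc] at ha; simp only [Finset.mem_range]; omega
    · intro a ha; simp only [Finset.mem_range] at ha; simp only [Finset.mem_Icc]; omega
    · intro a ha; simp only [Finset.mem_Icc] at ha; omega
    · intro a ha; simp only [Finset.mem_range] at ha; omega
    · intro a ha; simp only [Finset.mem_Icc] at ha; congr 1; omega
  rw [hre, Finset.mul_sum]
  refine Finset.sum_congr rfl fun k hk => ?_
  rw [hre, Finset.mul_sum]
  refine Finset.sum_congr rfl fun l hl => ?_
  rw [Finset.mem_range, Nat.lt_succ_iff] at hk hl
  have h1 : 2*C - (2*C - k) = k := by omega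
  have h2 : 2*C - (2*C - l) = l := by omega
  have h3 : (-1:ℂ)^((2*C-k)+(2*C-l)) = (-1:ℂ)^(k+l) := by
    rw [show (2*C-k)+(2*C-l) = (k+l) + 2*(2*C - k - l) by omega, pow_add, pow_mul]
    simp
  rw [h1, h2, h3, hc]
  simp only [hw]
  push_cast
  ring
end
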